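/- arXiv:2107.09544 — 5 statements merged into one kernel-verified Lean document; each statement's English description precedes it below -/
import Mathlib

section
/- For real third-order tensors A of size n₁×n₂×n₃ and B of size n₂×n₄×n₃, the t-product satisfies ‖A*B‖_F ≤ ‖A‖₂·‖B‖_F and ‖A*B‖_F ≤ ‖A‖_F·‖B‖₂. -/
open scoped Matrix.Norms.L2Operator

noncomputable section

/-- The t-product of third-order tensors. -/
def tProd {n₁ n₂ n₃ n₄ : ℕ} [NeZero n₃] (A : Fin n₁ → Fin n₂ → ZMod n₃ → ℝ)
    (B : Fin n₂ → Fin n₄ → ZMod n₃ → ℝ) : Fin n₁ → Fin n₄ → ZMod n₃ → ℝ :=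
  fun i j k => ∑ l : Fin n₂, ∑ m : ZMod n₃, A i l (k - m) * B l j m

/-- The Frobenius norm of a third-order tensor. -/
def frobNorm {n₁ n₂ n₃ : ℕ} [NeZero n₃] (A : Fin n₁ → Fin n₂ → ZMod n₃ → ℝ) : ℝ :=
  Real.sqrt (∑ i : Fin n₁, ∑ j : Fin n₂, ∑ k : ZMod n₃, (A i j k) ^ 2)

/-- The block circulant matrix of a third-order tensor. -/
def bcirc {n₁ n₂ n₃ : ℕ} (A : Fin n₁ → Fin n₂ → ZMod n₃ → ℝ) :
    Matrix (Fin n₁ × ZMod n₃) (Fin n₂ × ZMod n₃) ℝ :=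
  fun p q => A p.1 q.1 (p.2 - q.2)

/-- The spectral norm of a third-order tensor: the L2 operator norm of its
block circulant matrix. -/
def specNorm {n₁ n₂ n₃ : ℕ} [NeZero n₃] (A : Fin n₁ → Fin n₂ → ZMod n₃ → ℝ) : ℝ :=
  ‖bcirc A‖

/-- The identity tensor. -/
def tId (n n₃ : ℕ) : Fin n → Fin n → ZMod n₃ → ℝ :=
  fun i j k => if i = j ∧ k = 0 then 1 else 0

/-- The tensor transpose. -/
def tTrans {n₁ n₂ n₃ : ℕ} (A : Fin n₁ → Fin n₂ → ZMod n₃ → ℝ) :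
    Fin n₂ → Fin n₁ → ZMod n₃ → ℝ :=
  fun i j k => A j i (-k)

/-- `X` is a Moore-Penrose inverse of `A`. -/
def IsMPInv {n₁ n₂ n₃ : ℕ} [NeZero n₃] (A : Fin n₁ → Fin n₂ → ZMod n₃ → ℝ)
    (X : Fin n₂ → Fin n₁ → ZMod n₃ → ℝ) : Prop :=
  tProd (tProd A X) A = A ∧ tProd (tProd X A) X = X ∧
    tTrans (tProd A X) = tProd A X ∧ tTrans (tProd X A) = tProd X A

/-- The `i`-th DFT block of a third-order tensor. -/
def dftBlock {n₁ n₂ n₃ : ℕ} [NeZero n₃] (A : Fin n₁ → Fin n₂ → ZMod n₃ → ℝ) (i : ZMod n₃) :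
    Matrix (Fin n₁) (Fin n₂) ℂ :=
  fun p q => ∑ k : ZMod n₃,
    Complex.exp (-2 * Real.pi * Complex.I * (i.val : ℂ) * (k.val : ℂ) / (n₃ : ℂ)) * (A p q k : ℂ)

end


open Matrix
lemma sum_sq_mulVec_le {m n : Type*} [Fintype m] [Fintype n] [DecidableEq m] [DecidableEq n]
    (C : Matrix m n ℝ) (x : n → ℝ) :
    ∑ i, (C.mulVec x i) ^ 2 ≤ ‖C‖ ^ 2 * ∑ j, (x j) ^ 2 := by
  have h := C.l2_opNorm_mulVec ((WithLp.equiv 2 (n → ℝ)).symm x)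
  rw [EuclideanSpace.norm_eq, EuclideanSpace.norm_eq] at h
  simp only [WithLp.equiv_symm_apply, PiLp.toLp_apply, WithLp.ofLp_toLp, EuclideanSpace.equiv, Real.norm_eq_abs, sq_abs] at h
  have h1 : (0:ℝ) ≤ ∑ i, (C.mulVec x i) ^ 2 := Finset.sum_nonneg fun _ _ => sq_nonneg _
  have h2 : (0:ℝ) ≤ ∑ j, (x j) ^ 2 := Finset.sum_nonneg fun _ _ => sq_nonneg _
  calc ∑ i, (C.mulVec x i) ^ 2
      = Real.sqrt (∑ i, (C.mulVec x i) ^ 2) ^ 2 := (Real.sq_sqrt h1).symm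
    _ ≤ (‖C‖ * Real.sqrt (∑ j, (x j) ^ 2)) ^ 2 :=
        pow_le_pow_left₀ (Real.sqrt_nonneg _) h 2
    _ = ‖C‖ ^ 2 * ∑ j, (x j) ^ 2 := by rw [mul_pow, Real.sq_sqrt h2]


theorem tprod_frobNorm_le (n₁ n₂ n₃ n₄ : ℕ) [NeZero n₃]
    (hn₁ : 0 < n₁) (hn₂ : 0 < n₂) (hn₄ : 0 < n₄)
    (A : Fin n₁ → Fin n₂ → ZMod n₃ → ℝ) (B : Fin n₂ → Fin n₄ → ZMod n₃ → ℝ) :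
    frobNorm (tProd A B) ≤ specNorm A * frobNorm B ∧
      frobNorm (tProd A B) ≤ frobNorm A * specNorm B := by
  set S := ∑ i : Fin n₁, ∑ j : Fin n₄, ∑ k : ZMod n₃, (tProd A B i j k) ^ 2 with hS
  set TA := ∑ i : Fin n₁, ∑ l : Fin n₂, ∑ m : ZMod n₃, (A i l m) ^ 2 with hTA
  set TB := ∑ l : Fin n₂, ∑ j : Fin n₄, ∑ m : ZMod n₃, (B l j m) ^ 2 with hTB
  have hTBnn : (0:ℝ) ≤ TB := Finset.sum_nonneg fun _ _ => Finset.sum_nonneg fun _ _ =>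
    Finset.sum_nonneg fun _ _ => sq_nonneg _
  have hTAnn : (0:ℝ) ≤ TA := Finset.sum_nonneg fun _ _ => Finset.sum_nonneg fun _ _ =>
    Finset.sum_nonneg fun _ _ => sq_nonneg _
  -- Part 1
  have key1 : ∀ (j : Fin n₄) (p : Fin n₁ × ZMod n₃),
      (bcirc A).mulVec (fun q => B q.1 j q.2) p = tProd A B p.1 j p.2 := by
    intro j p
    simp [Matrix.mulVec, dotProduct, tProd, bcirc, Fintype.sum_prod_type]
  have claim1 : S ≤ ‖bcirc A‖ ^ 2 * TB := by
    have hrw : S = ∑ j : Fin n₄, ∑ p : Fin n₁ × ZMod n₃,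
        ((bcirc A).mulVec (fun q => B q.1 j q.2) p) ^ 2 := by
      simp_rw [key1, Fintype.sum_prod_type]
      rw [hS, Finset.sum_comm]
    rw [hrw]
    calc ∑ j : Fin n₄, ∑ p : Fin n₁ × ZMod n₃,
          ((bcirc A).mulVec (fun q => B q.1 j q.2) p) ^ 2
        ≤ ∑ j : Fin n₄, ‖bcirc A‖ ^ 2 * ∑ q : Fin n₂ × ZMod n₃, (B q.1 j q.2) ^ 2 :=
          Finset.sum_le_sum fun j _ => sum_sq_mulVec_le _ _
      _ = ‖bcirc A‖ ^ 2 * TB := by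
          rw [← Finset.mul_sum]
          congr 1
          simp_rw [Fintype.sum_prod_type]
          rw [hTB, Finset.sum_comm]
  -- Part 2
  have key2 : ∀ (i : Fin n₁) (p : Fin n₄ × ZMod n₃),
      ((bcirc B)ᴴ.mulVec (fun q => A i q.1 (-q.2))) p = tProd A B i p.1 (-p.2) := by
    intro i p
    simp only [Matrix.mulVec, dotProduct, Matrix.conjTranspose_apply, star_trivial, bcirc,
      tProd, Fintype.sum_prod_type]
    refine Finset.sum_congr rfl fun l _ => ?_
    refine Fintype.sum_equiv (Equiv.subRight p.2) _ _ fun m => ?_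
    simp only [Equiv.subRight_apply]
    rw [show -p.2 - (m - p.2) = -m by ring]
    ring
  have claim2 : S ≤ ‖bcirc B‖ ^ 2 * TA := by
    have hrw : S = ∑ i : Fin n₁, ∑ p : Fin n₄ × ZMod n₃,
        ((bcirc B)ᴴ.mulVec (fun q => A i q.1 (-q.2)) p) ^ 2 := by
      simp_rw [key2, Fintype.sum_prod_type]
      rw [hS]
      refine Finset.sum_congr rfl fun i _ => Finset.sum_congr rfl fun j _ => ?_
      exact (Fintype.sum_equiv (Equiv.neg (ZMod n₃)) _ _ fun k => by simp)
    rw [hrw]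
    calc ∑ i : Fin n₁, ∑ p : Fin n₄ × ZMod n₃,
          ((bcirc B)ᴴ.mulVec (fun q => A i q.1 (-q.2)) p) ^ 2
        ≤ ∑ i : Fin n₁, ‖(bcirc B)ᴴ‖ ^ 2 * ∑ q : Fin n₂ × ZMod n₃, (A i q.1 (-q.2)) ^ 2 :=
          Finset.sum_le_sum fun i _ => sum_sq_mulVec_le _ _
      _ = ‖bcirc B‖ ^ 2 * TA := by
          rw [Matrix.l2_opNorm_conjTranspose, ← Finset.mul_sum]
          congr 1
          rw [hTA]
          refine Finset.sum_congr rfl fun i _ => ?_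
          simp_rw [Fintype.sum_prod_type]
          refine Finset.sum_congr rfl fun l _ => ?_
          exact (Fintype.sum_equiv (Equiv.neg (ZMod n₃)) _ _ fun m => by simp)
  constructor
  · show Real.sqrt S ≤ ‖bcirc A‖ * Real.sqrt TB
    calc Real.sqrt S ≤ Real.sqrt (‖bcirc A‖ ^ 2 * TB) := Real.sqrt_le_sqrt claim1
      _ = ‖bcirc A‖ * Real.sqrt TB := by
          rw [Real.sqrt_mul (sq_nonneg _), Real.sqrt_sq (norm_nonneg _)]
  · show Real.sqrt S ≤ Real.sqrt TA * ‖bcirc B‖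
    calc Real.sqrt S ≤ Real.sqrt (‖bcirc B‖ ^ 2 * TA) := Real.sqrt_le_sqrt claim2
      _ = Real.sqrt TA * ‖bcirc B‖ := by
          rw [Real.sqrt_mul (sq_nonneg _), Real.sqrt_sq (norm_nonneg _), mul_comm]
end

section
/- For real third-order tensors A of size n₁×n₂×n₃ and B of size n₂×n₄×n₃, the t-product satisfies ‖A*B‖₂ ≤ ‖A‖₂·‖B‖₂ and ‖A*B‖_F ≤ √n₃·‖A‖_F·‖B‖_F. -/
open scoped Matrix.Norms.L2Operator

lemma bcirc_tProd {n₁ n₂ n₃ n₄ : ℕ} [NeZero n₃] (A : Fin n₁ → Fin n₂ → ZMod n₃ → ℝ)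
    (B : Fin n₂ → Fin n₄ → ZMod n₃ → ℝ) :
    bcirc (tProd A B) = bcirc A * bcirc B := by
  ext ⟨i, k⟩ ⟨j, m'⟩
  simp only [bcirc, tProd, Matrix.mul_apply, Fintype.sum_prod_type]
  refine Finset.sum_congr rfl fun l _ => ?_
  refine Finset.sum_nbij' (fun m => m + m') (fun m => m - m') (by simp) (by simp)
    (by intro m _; ring_nf) (by intro m _; ring_nf) ?_
  intro m _
  ring_nf

noncomputable def fnorm {m n : Type*} [Fintype m] [Fintype n] (M : Matrix m n ℝ) : ℝ :=
  @norm _ (Matrix.frobeniusSeminormedAddCommGroup.toNorm) M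

lemma fnorm_mul {m n l : Type*} [Fintype m] [Fintype n] [Fintype l] [DecidableEq n]
    (M : Matrix m n ℝ) (N : Matrix n l ℝ) : fnorm (M * N) ≤ fnorm M * fnorm N :=
  Matrix.frobenius_norm_mul M N

lemma frob_bcirc {n₁ n₂ n₃ : ℕ} [NeZero n₃] (A : Fin n₁ → Fin n₂ → ZMod n₃ → ℝ) :
    fnorm (bcirc A) = Real.sqrt n₃ * frobNorm A := by
  rw [fnorm, Matrix.frobenius_norm_def, frobNorm, ← Real.sqrt_eq_rpow,
    ← Real.sqrt_mul (by positivity)]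
  congr 1
  simp only [Fintype.sum_prod_type, bcirc, Real.norm_eq_abs,
    show ((2:ℝ)) = ((2:ℕ):ℝ) by norm_num, Real.rpow_natCast, sq_abs]
  have key : ∀ (i : Fin n₁) (j : Fin n₂),
      ∑ k : ZMod n₃, ∑ m : ZMod n₃, (A i j (k - m)) ^ 2 =
        (n₃ : ℝ) * ∑ k : ZMod n₃, (A i j k) ^ 2 := by
    intro i j
    have : ∀ m : ZMod n₃, ∑ k : ZMod n₃, (A i j (k - m)) ^ 2 = ∑ k : ZMod n₃, (A i j k) ^ 2 :=
      fun m => Fintype.sum_equiv (Equiv.subRight m) _ _ (fun k => rfl)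
    rw [Finset.sum_comm]
    simp [this, ZMod.card, Finset.sum_const]
  calc ∑ i : Fin n₁, ∑ k : ZMod n₃, ∑ j : Fin n₂, ∑ m : ZMod n₃, (A i j (k-m)) ^ 2
      = ∑ i : Fin n₁, ∑ j : Fin n₂, ∑ k : ZMod n₃, ∑ m : ZMod n₃, (A i j (k-m)) ^ 2 := by
        refine Finset.sum_congr rfl fun i _ => Finset.sum_comm
    _ = ∑ i : Fin n₁, ∑ j : Fin n₂, (n₃:ℝ) * ∑ k : ZMod n₃, (A i j k) ^ 2 := by
        simp_rw [key]
    _ = (n₃:ℝ) * ∑ i : Fin n₁, ∑ j : Fin n₂, ∑ k : ZMod n₃, (A i j k) ^ 2 := by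
        simp [Finset.mul_sum]

lemma frob_tProd_le {n₁ n₂ n₃ n₄ : ℕ} [NeZero n₃] (A : Fin n₁ → Fin n₂ → ZMod n₃ → ℝ)
    (B : Fin n₂ → Fin n₄ → ZMod n₃ → ℝ) :
    frobNorm (tProd A B) ≤ Real.sqrt n₃ * frobNorm A * frobNorm B := by
  have h := fnorm_mul (bcirc A) (bcirc B)
  rw [← bcirc_tProd, frob_bcirc, frob_bcirc, frob_bcirc] at h
  have hs : (0:ℝ) < Real.sqrt n₃ := Real.sqrt_pos.mpr (by
    exact_mod_cast Nat.pos_of_ne_zero (NeZero.ne n₃))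
  have h' : Real.sqrt n₃ * frobNorm (tProd A B) ≤
      Real.sqrt n₃ * (Real.sqrt n₃ * frobNorm A * frobNorm B) := by
    linarith [h, show Real.sqrt n₃ * frobNorm A * (Real.sqrt n₃ * frobNorm B)
      = Real.sqrt n₃ * (Real.sqrt n₃ * frobNorm A * frobNorm B) from by ring]
  exact le_of_mul_le_mul_left h' hs


theorem tprod_specNorm_le (n₁ n₂ n₃ n₄ : ℕ) [NeZero n₃]
    (hn₁ : 0 < n₁) (hn₂ : 0 < n₂) (hn₄ : 0 < n₄)
    (A : Fin n₁ → Fin n₂ → ZMod n₃ → ℝ) (B : Fin n₂ → Fin n₄ → ZMod n₃ → ℝ) :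
    specNorm (tProd A B) ≤ specNorm A * specNorm B ∧
      frobNorm (tProd A B) ≤ Real.sqrt n₃ * frobNorm A * frobNorm B := by
  refine ⟨?_, frob_tProd_le A B⟩
  rw [specNorm, specNorm, specNorm, bcirc_tProd]
  exact Matrix.l2_opNorm_mul (bcirc A) (bcirc B)
end

section
/- Let A be a real tensor of size n×n×n₃, invertible with inverse A⁻¹, let E be a tensor of size n×n×n₃ with ‖A⁻¹‖₂·‖E‖₂ < 1, and set M = A+E (entrywise). Let B and K be tensors of size n×n₄×n₃ with B ≠ 0, and let X be the (unique) solution of A*X = B. Then there exists a unique tensor H of size n×n₄×n₃ with M*(X+H) = B+K, and it satisfies ‖H‖_F/‖X‖_F ≤ (κ₁/γ)·(‖E‖₂/‖A‖_F + √n₃·‖K‖_F/‖B‖_F), where κ₁ = ‖A⁻¹‖₂·‖A‖_F and γ = 1 − ‖A⁻¹‖₂·‖E‖₂. -/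
open scoped Matrix.Norms.L2Operator

noncomputable section AuxTensor

namespace TensorAux

variable {n₁ n₂ n₃ n₄ n₅ : ℕ} [NeZero n₃]

def unfold (Y : Fin n₁ → Fin n₄ → ZMod n₃ → ℝ) : Matrix (Fin n₁ × ZMod n₃) (Fin n₄) ℝ :=
  fun p j => Y p.1 j p.2

lemma unfold_inj {Y Z : Fin n₁ → Fin n₄ → ZMod n₃ → ℝ} (h : unfold Y = unfold Z) : Y = Z := by
  funext i j k
  exact congrFun (congrFun h (i, k)) j

lemma unfold_tProd (A : Fin n₁ → Fin n₂ → ZMod n₃ → ℝ) (Y : Fin n₂ → Fin n₄ → ZMod n₃ → ℝ) :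
    unfold (tProd A Y) = bcirc A * unfold Y := by
  funext p j
  simp only [unfold, tProd, Matrix.mul_apply, bcirc, Fintype.sum_prod_type]

lemma bcirc_mul (A : Fin n₁ → Fin n₂ → ZMod n₃ → ℝ) (Bt : Fin n₂ → Fin n₄ → ZMod n₃ → ℝ) :
    bcirc (tProd A Bt) = bcirc A * bcirc Bt := by
  funext p q
  simp only [bcirc, tProd, Matrix.mul_apply, Fintype.sum_prod_type]
  refine Finset.sum_congr rfl fun l _ => ?_
  refine Fintype.sum_equiv (Equiv.addRight q.2) _ _ fun m => ?_
  have h1 : p.2 - q.2 - m = p.2 - (Equiv.addRight q.2 m) := by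
    simp [Equiv.addRight]; ring
  have h2 : (Equiv.addRight q.2 m) - q.2 = m := by
    simp [Equiv.addRight]
  rw [h1, h2]

lemma bcirc_tId (n : ℕ) :
    bcirc (tId n n₃) = (1 : Matrix (Fin n × ZMod n₃) (Fin n × ZMod n₃) ℝ) := by
  funext p q
  simp only [bcirc, tId, Matrix.one_apply, Prod.ext_iff, sub_eq_zero]

lemma bcirc_add (A E : Fin n₁ → Fin n₂ → ZMod n₃ → ℝ) :
    bcirc (A + E) = bcirc A + bcirc E := rfl

lemma tProd_add_left (A E : Fin n₁ → Fin n₂ → ZMod n₃ → ℝ)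
    (Y : Fin n₂ → Fin n₄ → ZMod n₃ → ℝ) :
    tProd (A + E) Y = tProd A Y + tProd E Y := by
  funext i j k
  simp [tProd, add_mul, Finset.sum_add_distrib]

lemma tProd_add_right (A : Fin n₁ → Fin n₂ → ZMod n₃ → ℝ)
    (Y Z : Fin n₂ → Fin n₄ → ZMod n₃ → ℝ) :
    tProd A (Y + Z) = tProd A Y + tProd A Z := by
  funext i j k
  simp [tProd, mul_add, Finset.sum_add_distrib]

lemma tProd_assoc (A : Fin n₁ → Fin n₂ → ZMod n₃ → ℝ) (Bt : Fin n₂ → Fin n₅ → ZMod n₃ → ℝ)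
    (Y : Fin n₅ → Fin n₄ → ZMod n₃ → ℝ) :
    tProd (tProd A Bt) Y = tProd A (tProd Bt Y) := by
  apply unfold_inj
  rw [unfold_tProd, unfold_tProd, unfold_tProd, bcirc_mul, Matrix.mul_assoc]

lemma tProd_id (Y : Fin n₁ → Fin n₄ → ZMod n₃ → ℝ) : tProd (tId n₁ n₃) Y = Y := by
  apply unfold_inj
  rw [unfold_tProd, bcirc_tId, Matrix.one_mul]

lemma tProd_zero_left (Y : Fin n₂ → Fin n₄ → ZMod n₃ → ℝ) :
    tProd (0 : Fin n₁ → Fin n₂ → ZMod n₃ → ℝ) Y = 0 := by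
  funext i j k
  simp [tProd]

lemma tProd_zero_right (A : Fin n₁ → Fin n₂ → ZMod n₃ → ℝ) :
    tProd A (0 : Fin n₂ → Fin n₄ → ZMod n₃ → ℝ) = 0 := by
  funext i j k
  simp [tProd]

def vecE (Y : Fin n₁ → Fin n₄ → ZMod n₃ → ℝ) :
    EuclideanSpace ℝ (Fin n₁ × Fin n₄ × ZMod n₃) :=
  WithLp.toLp 2 (fun x : Fin n₁ × Fin n₄ × ZMod n₃ => Y x.1 x.2.1 x.2.2)

lemma frob_eq_norm (Y : Fin n₁ → Fin n₄ → ZMod n₃ → ℝ) : frobNorm Y = ‖vecE Y‖ := by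
  rw [EuclideanSpace.norm_eq, frobNorm]
  congr 1
  rw [Fintype.sum_prod_type]
  refine Finset.sum_congr rfl fun i _ => ?_
  rw [Fintype.sum_prod_type]
  refine Finset.sum_congr rfl fun j _ => ?_
  refine Finset.sum_congr rfl fun k _ => ?_
  rw [Real.norm_eq_abs, sq_abs]
  rfl

lemma frob_nonneg (Y : Fin n₁ → Fin n₄ → ZMod n₃ → ℝ) : 0 ≤ frobNorm Y :=
  Real.sqrt_nonneg _

lemma frob_add_le (Y Z : Fin n₁ → Fin n₄ → ZMod n₃ → ℝ) :
    frobNorm (Y + Z) ≤ frobNorm Y + frobNorm Z := by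
  rw [frob_eq_norm, frob_eq_norm, frob_eq_norm]
  exact norm_add_le (vecE Y) (vecE Z)

lemma frob_sub_le (Y Z : Fin n₁ → Fin n₄ → ZMod n₃ → ℝ) :
    frobNorm (Y - Z) ≤ frobNorm Y + frobNorm Z := by
  rw [frob_eq_norm, frob_eq_norm, frob_eq_norm]
  exact norm_sub_le (vecE Y) (vecE Z)

lemma frob_pos {Y : Fin n₁ → Fin n₄ → ZMod n₃ → ℝ} (hY : Y ≠ 0) : 0 < frobNorm Y := by
  rw [frob_eq_norm, norm_pos_iff]
  intro h
  apply hY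
  funext i j k
  exact congrArg (fun v => v (i, j, k)) h

lemma frob_tProd_le (M : Fin n₁ → Fin n₂ → ZMod n₃ → ℝ) (Y : Fin n₂ → Fin n₄ → ZMod n₃ → ℝ) :
    frobNorm (tProd M Y) ≤ specNorm M * frobNorm Y := by
  have key : ∀ j : Fin n₄, (∑ p : Fin n₁ × ZMod n₃, (tProd M Y p.1 j p.2) ^ 2) ≤
      specNorm M ^ 2 * ∑ q : Fin n₂ × ZMod n₃, (Y q.1 j q.2) ^ 2 := by
    intro j
    set x : EuclideanSpace ℝ (Fin n₂ × ZMod n₃) := WithLp.toLp 2 (fun q : Fin n₂ × ZMod n₃ => Y q.1 j q.2) with hxdef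
    set y : EuclideanSpace ℝ (Fin n₁ × ZMod n₃) :=
      (EuclideanSpace.equiv (Fin n₁ × ZMod n₃) ℝ).symm (Matrix.mulVec (bcirc M) x) with hydef
    have hmv : ∀ p : Fin n₁ × ZMod n₃, y p = tProd M Y p.1 j p.2 := by
      intro p
      show ∑ q : Fin n₂ × ZMod n₃, bcirc M p q * x q = _
      rw [Fintype.sum_prod_type]
      rfl
    have h1 : ‖y‖ ≤ specNorm M * ‖x‖ := Matrix.l2_opNorm_mulVec (bcirc M) x
    have e1 : (∑ p : Fin n₁ × ZMod n₃, (tProd M Y p.1 j p.2) ^ 2) = ‖y‖ ^ 2 := by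
      rw [EuclideanSpace.norm_eq, Real.sq_sqrt (by positivity)]
      refine Finset.sum_congr rfl fun p _ => ?_
      rw [Real.norm_eq_abs, sq_abs, hmv p]
    have e2 : (∑ q : Fin n₂ × ZMod n₃, (Y q.1 j q.2) ^ 2) = ‖x‖ ^ 2 := by
      rw [EuclideanSpace.norm_eq, Real.sq_sqrt (by positivity)]
      refine Finset.sum_congr rfl fun q _ => ?_
      rw [Real.norm_eq_abs, sq_abs]
    rw [e1, e2]
    calc ‖y‖ ^ 2 ≤ (specNorm M * ‖x‖) ^ 2 := by
          exact pow_le_pow_left₀ (norm_nonneg _) h1 2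
      _ = specNorm M ^ 2 * ‖x‖ ^ 2 := by ring
  have r1 : (∑ i : Fin n₁, ∑ j : Fin n₄, ∑ k : ZMod n₃, (tProd M Y i j k) ^ 2)
      = ∑ j : Fin n₄, ∑ p : Fin n₁ × ZMod n₃, (tProd M Y p.1 j p.2) ^ 2 := by
    rw [Finset.sum_comm]
    exact Finset.sum_congr rfl fun j _ =>
      (Fintype.sum_prod_type (fun p : Fin n₁ × ZMod n₃ => (tProd M Y p.1 j p.2) ^ 2)).symm
  have r2 : (∑ l : Fin n₂, ∑ j : Fin n₄, ∑ m : ZMod n₃, (Y l j m) ^ 2)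
      = ∑ j : Fin n₄, ∑ q : Fin n₂ × ZMod n₃, (Y q.1 j q.2) ^ 2 := by
    rw [Finset.sum_comm]
    exact Finset.sum_congr rfl fun j _ =>
      (Fintype.sum_prod_type (fun q : Fin n₂ × ZMod n₃ => (Y q.1 j q.2) ^ 2)).symm
  have hS : (∑ i : Fin n₁, ∑ j : Fin n₄, ∑ k : ZMod n₃, (tProd M Y i j k) ^ 2)
      ≤ specNorm M ^ 2 * ∑ l : Fin n₂, ∑ j : Fin n₄, ∑ m : ZMod n₃, (Y l j m) ^ 2 := by
    rw [r1, r2, Finset.mul_sum]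
    exact Finset.sum_le_sum fun j _ => key j
  unfold frobNorm
  calc Real.sqrt (∑ i : Fin n₁, ∑ j : Fin n₄, ∑ k : ZMod n₃, (tProd M Y i j k) ^ 2)
      ≤ Real.sqrt (specNorm M ^ 2 *
        ∑ l : Fin n₂, ∑ j : Fin n₄, ∑ m : ZMod n₃, (Y l j m) ^ 2) := Real.sqrt_le_sqrt hS
    _ = specNorm M * Real.sqrt (∑ l : Fin n₂, ∑ j : Fin n₄, ∑ m : ZMod n₃, (Y l j m) ^ 2) := by
        rw [Real.sqrt_mul (sq_nonneg _), Real.sqrt_sq (show (0:ℝ) ≤ specNorm M from norm_nonneg _)]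

lemma frob_tProd_le' (A : Fin n₁ → Fin n₂ → ZMod n₃ → ℝ) (Y : Fin n₂ → Fin n₄ → ZMod n₃ → ℝ) :
    frobNorm (tProd A Y) ≤ Real.sqrt n₃ * frobNorm A * frobNorm Y := by
  set SA : Fin n₁ → ℝ := fun i => ∑ l : Fin n₂, ∑ m : ZMod n₃, (A i l m) ^ 2 with hSA
  set SY : Fin n₄ → ℝ := fun j => ∑ l : Fin n₂, ∑ m : ZMod n₃, (Y l j m) ^ 2 with hSY
  have hpt : ∀ (i : Fin n₁) (j : Fin n₄) (k : ZMod n₃),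
      (tProd A Y i j k) ^ 2 ≤ SA i * SY j := by
    intro i j k
    have h := Finset.sum_mul_sq_le_sq_mul_sq Finset.univ
      (fun q : Fin n₂ × ZMod n₃ => A i q.1 (k - q.2))
      (fun q : Fin n₂ × ZMod n₃ => Y q.1 j q.2)
    have e0 : tProd A Y i j k = ∑ q : Fin n₂ × ZMod n₃, A i q.1 (k - q.2) * Y q.1 j q.2 := by
      rw [Fintype.sum_prod_type]
      rfl
    have e1 : (∑ q : Fin n₂ × ZMod n₃, (A i q.1 (k - q.2)) ^ 2) = SA i := by
      rw [Fintype.sum_prod_type]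
      refine Finset.sum_congr rfl fun l _ => ?_
      refine Fintype.sum_equiv (Equiv.subLeft k) _ _ fun m => ?_
      rw [Equiv.subLeft_apply]
    have e2 : (∑ q : Fin n₂ × ZMod n₃, (Y q.1 j q.2) ^ 2) = SY j := by
      rw [Fintype.sum_prod_type]
    rw [e0]
    calc (∑ q : Fin n₂ × ZMod n₃, A i q.1 (k - q.2) * Y q.1 j q.2) ^ 2
        ≤ (∑ q : Fin n₂ × ZMod n₃, (A i q.1 (k - q.2)) ^ 2) *
          ∑ q : Fin n₂ × ZMod n₃, (Y q.1 j q.2) ^ 2 := h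
      _ = SA i * SY j := by rw [e1, e2]
  have hsum : (∑ i : Fin n₁, ∑ j : Fin n₄, ∑ k : ZMod n₃, (tProd A Y i j k) ^ 2)
      ≤ (n₃ : ℝ) * ((∑ i : Fin n₁, SA i) * (∑ j : Fin n₄, SY j)) := by
    calc (∑ i : Fin n₁, ∑ j : Fin n₄, ∑ k : ZMod n₃, (tProd A Y i j k) ^ 2)
        ≤ ∑ i : Fin n₁, ∑ j : Fin n₄, ∑ _k : ZMod n₃, SA i * SY j := by
          refine Finset.sum_le_sum fun i _ => Finset.sum_le_sum fun j _ =>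
            Finset.sum_le_sum fun k _ => hpt i j k
      _ = (n₃ : ℝ) * ((∑ i : Fin n₁, SA i) * (∑ j : Fin n₄, SY j)) := by
          simp only [Finset.sum_const, Finset.card_univ, ZMod.card, nsmul_eq_mul]
          rw [Finset.sum_mul_sum, Finset.mul_sum]
          simp only [Finset.mul_sum]
  have hA : frobNorm A = Real.sqrt (∑ i : Fin n₁, SA i) := rfl
  have hY : frobNorm Y = Real.sqrt (∑ j : Fin n₄, SY j) := by
    rw [frobNorm]
    congr 1
    rw [Finset.sum_comm]
  rw [hY]
  rw [frobNorm, hA]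
  calc Real.sqrt (∑ i : Fin n₁, ∑ j : Fin n₄, ∑ k : ZMod n₃, (tProd A Y i j k) ^ 2)
      ≤ Real.sqrt ((n₃ : ℝ) * ((∑ i : Fin n₁, SA i) * (∑ j : Fin n₄, SY j))) :=
        Real.sqrt_le_sqrt hsum
    _ = Real.sqrt n₃ * Real.sqrt (∑ i : Fin n₁, SA i) * Real.sqrt (∑ j : Fin n₄, SY j) := by
        rw [Real.sqrt_mul (by positivity), Real.sqrt_mul (by positivity), mul_assoc]

lemma final_algebra (sAi sE fA fB fK fX fH s3 : ℝ) (hsAi0 : 0 ≤ sAi)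
    (hfK0 : 0 ≤ fK) (hγ : 0 < 1 - sAi * sE) (hfX : 0 < fX)
    (hfA : 0 < fA) (hfB : 0 < fB)
    (hb1 : fH ≤ sAi * fK + sAi * sE * fX + sAi * sE * fH)
    (hb2 : fB ≤ s3 * fA * fX) :
    fH / fX ≤ (sAi * fA / (1 - sAi * sE)) * (sE / fA + s3 * fK / fB) := by
  rw [div_le_iff₀ hfX]
  have hpos : 0 < (1 - sAi * sE) * fB * fA := by positivity
  rw [← mul_le_mul_iff_left₀ hpos]
  have expand : sAi * fA / (1 - sAi * sE) * (sE / fA + s3 * fK / fB) * fX *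
      ((1 - sAi * sE) * fB * fA) =
      sAi * sE * fX * fB * fA + sAi * fA * (s3 * fK) * fX * fA := by
    field_simp
  rw [expand]
  have h7 : fH * (1 - sAi * sE) ≤ sAi * fK + sAi * sE * fX := by nlinarith [hb1]
  have h8 := mul_le_mul_of_nonneg_right h7 (le_of_lt (mul_pos hfB hfA))
  have h9 := mul_le_mul_of_nonneg_left hb2 (mul_nonneg (mul_nonneg hsAi0 hfK0) (le_of_lt hfA))
  nlinarith [h8, h9]

end TensorAux

end AuxTensor


theorem perturbed_system_frobenius_bound (n n₃ n₄ : ℕ) [NeZero n₃]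
    (hn : 0 < n) (hn₄ : 0 < n₄)
    (A Ainv E : Fin n → Fin n → ZMod n₃ → ℝ)
    (B K X : Fin n → Fin n₄ → ZMod n₃ → ℝ)
    (hA₁ : tProd A Ainv = tId n n₃) (hA₂ : tProd Ainv A = tId n n₃)
    (hE : specNorm Ainv * specNorm E < 1)
    (hB : B ≠ 0)
    (hX : tProd A X = B) :
    (∃! H : Fin n → Fin n₄ → ZMod n₃ → ℝ, tProd (A + E) (X + H) = B + K) ∧
      ∀ H : Fin n → Fin n₄ → ZMod n₃ → ℝ, tProd (A + E) (X + H) = B + K →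
        frobNorm H / frobNorm X ≤
          (specNorm Ainv * frobNorm A / (1 - specNorm Ainv * specNorm E)) *
            (specNorm E / frobNorm A + Real.sqrt n₃ * frobNorm K / frobNorm B) := by
  classical
  haveI : CompleteSpace (Matrix (Fin n × ZMod n₃) (Fin n × ZMod n₃) ℝ) :=
    FiniteDimensional.complete ℝ _
  set CA := bcirc A with hCA
  set CAi := bcirc Ainv with hCAi
  set CE := bcirc E with hCE
  have h1 : CA * CAi = 1 := by rw [← TensorAux.bcirc_mul, hA₁, TensorAux.bcirc_tId]
  have h2 : CAi * CA = 1 := by rw [← TensorAux.bcirc_mul, hA₂, TensorAux.bcirc_tId]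
  have hnorm : ‖-(CAi * CE)‖ < 1 := by
    rw [norm_neg]
    exact lt_of_le_of_lt (Matrix.l2_opNorm_mul _ _) hE
  set u : (Matrix (Fin n × ZMod n₃) (Fin n × ZMod n₃) ℝ)ˣ := Units.oneSub _ hnorm with hu
  have huval : (u : Matrix (Fin n × ZMod n₃) (Fin n × ZMod n₃) ℝ) = 1 + CAi * CE := by
    rw [hu, Units.val_oneSub, sub_neg_eq_add]
  have hMfac : bcirc (A + E) = CA * (u : Matrix (Fin n × ZMod n₃) (Fin n × ZMod n₃) ℝ) := by
    rw [TensorAux.bcirc_add, huval, mul_add, mul_one, ← Matrix.mul_assoc, h1, Matrix.one_mul]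
  set N : Matrix (Fin n × ZMod n₃) (Fin n × ZMod n₃) ℝ := (↑u⁻¹ : Matrix _ _ ℝ) * CAi with hN
  have hNl : N * bcirc (A + E) = 1 := by
    rw [hN, hMfac, Matrix.mul_assoc, ← Matrix.mul_assoc CAi CA, h2, Matrix.one_mul]
    exact u.inv_mul
  have hNr : bcirc (A + E) * N = 1 := by
    rw [hN, hMfac, Matrix.mul_assoc,
      ← Matrix.mul_assoc ((u : Matrix (Fin n × ZMod n₃) (Fin n × ZMod n₃) ℝ))
        ((u⁻¹ : (Matrix (Fin n × ZMod n₃) (Fin n × ZMod n₃) ℝ)ˣ) : Matrix (Fin n × ZMod n₃) (Fin n × ZMod n₃) ℝ) CAi,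
      u.mul_inv, Matrix.one_mul, h1]
  -- the canonical solution
  set Y : Fin n → Fin n₄ → ZMod n₃ → ℝ :=
    fun i j k => (N * TensorAux.unfold (B + K)) (i, k) j with hY
  have hunfY : TensorAux.unfold Y = N * TensorAux.unfold (B + K) := rfl
  have hYsol : tProd (A + E) Y = B + K := by
    apply TensorAux.unfold_inj
    rw [TensorAux.unfold_tProd, hunfY, ← Matrix.mul_assoc, hNr, Matrix.one_mul]
  have huniq : ∀ Z : Fin n → Fin n₄ → ZMod n₃ → ℝ, tProd (A + E) Z = B + K → Z = Y := by
    intro Z hZ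
    apply TensorAux.unfold_inj
    have h := congrArg TensorAux.unfold hZ
    rw [TensorAux.unfold_tProd] at h
    have := congrArg (fun W => N * W) h
    rw [← Matrix.mul_assoc, hNl, Matrix.one_mul] at this
    rw [this, hunfY]
  constructor
  · refine ⟨Y - X, ?_, ?_⟩
    · show tProd (A + E) (X + (Y - X)) = B + K
      have hxy : X + (Y - X) = Y := by abel
      rw [hxy]
      exact hYsol
    · intro H hH
      have := huniq (X + H) hH
      rw [← this]
      abel
  · intro H hH
    have hXY : X + H = Y := huniq (X + H) hH
    -- key relation : tProd A H + (tProd E X + tProd E H) = K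
    have h3 : tProd A H + (tProd E X + tProd E H) = K := by
      have h := hH
      rw [TensorAux.tProd_add_left, TensorAux.tProd_add_right, TensorAux.tProd_add_right,
        hX] at h
      have h' : B + (tProd A H + (tProd E X + tProd E H)) = B + K := by
        rw [← h]; abel
      exact add_left_cancel h'
    have h4 : H = tProd Ainv (K - (tProd E X + tProd E H)) := by
      rw [← h3, add_sub_cancel_right, ← TensorAux.tProd_assoc, hA₂, TensorAux.tProd_id]
    have hsAi0 : 0 ≤ specNorm Ainv := norm_nonneg _
    have hfK0 : 0 ≤ frobNorm K := TensorAux.frob_nonneg _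
    have hγ : 0 < 1 - specNorm Ainv * specNorm E := by linarith
    have hXne : X ≠ 0 := by
      intro h0
      apply hB
      rw [← hX, h0, TensorAux.tProd_zero_right]
    have hfX : 0 < frobNorm X := TensorAux.frob_pos hXne
    have hAne : A ≠ 0 := by
      intro h0
      have hid : tId n n₃ = 0 := by rw [← hA₁, h0, TensorAux.tProd_zero_left]
      have h1' : tId n n₃ ⟨0, hn⟩ ⟨0, hn⟩ 0 = (1 : ℝ) := by simp [tId]
      rw [hid] at h1'
      simpa using h1'
    have hfA : 0 < frobNorm A := TensorAux.frob_pos hAne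
    have hfB : 0 < frobNorm B := TensorAux.frob_pos hB
    have hb1 : frobNorm H ≤ specNorm Ainv * frobNorm K +
        specNorm Ainv * specNorm E * frobNorm X +
        specNorm Ainv * specNorm E * frobNorm H := by
      have c1 : frobNorm H ≤ specNorm Ainv * frobNorm (K - (tProd E X + tProd E H)) := by
        conv_lhs => rw [h4]
        exact TensorAux.frob_tProd_le Ainv _
      have c2 : frobNorm (K - (tProd E X + tProd E H)) ≤
          frobNorm K + (frobNorm (tProd E X) + frobNorm (tProd E H)) :=
        le_trans (TensorAux.frob_sub_le _ _)
          (by exact add_le_add (le_refl _) (TensorAux.frob_add_le _ _))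
      have c3 : frobNorm (tProd E X) ≤ specNorm E * frobNorm X := TensorAux.frob_tProd_le E X
      have c4 : frobNorm (tProd E H) ≤ specNorm E * frobNorm H := TensorAux.frob_tProd_le E H
      nlinarith [mul_le_mul_of_nonneg_left c2 hsAi0]
    have hb2 : frobNorm B ≤ Real.sqrt n₃ * frobNorm A * frobNorm X := by
      rw [← hX]
      exact TensorAux.frob_tProd_le' A X
    exact TensorAux.final_algebra _ _ _ _ _ _ _ _ hsAi0 hfK0 hγ hfX hfA hfB hb1 hb2
end

section
/- Let A be a real tensor of size n×n×n₃, invertible with inverse A⁻¹, let E be a tensor of size n×n×n₃ with ‖A⁻¹‖₂·‖E‖₂ < 1, and set M = A+E (entrywise). Let B and K be tensors of size n×n₄×n₃ with B ≠ 0, let X be the solution of A*X = B, and let H be the unique tensor with M*(X+H) = B+K. Then ‖H‖₂/‖X‖₂ ≤ (κ₂/γ)·(‖E‖₂/‖A‖₂ + ‖K‖₂/‖B‖₂), where κ₂ = ‖A⁻¹‖₂·‖A‖₂ and γ = 1 − ‖A⁻¹‖₂·‖E‖₂. -/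
open scoped Matrix.Norms.L2Operator

set_option linter.unusedSectionVars false

section Aux

open scoped Matrix.Norms.L2Operator

variable {n₁ n₂ n₃ n₄ : ℕ} [NeZero n₃]

lemma bcirc_add' (A E : Fin n₁ → Fin n₂ → ZMod n₃ → ℝ) :
    bcirc (A + E) = bcirc A + bcirc E := by
  funext p q
  simp [bcirc, Matrix.add_apply]

lemma bcirc_mul' (A : Fin n₁ → Fin n₂ → ZMod n₃ → ℝ) (B : Fin n₂ → Fin n₄ → ZMod n₃ → ℝ) :
    bcirc (tProd A B) = bcirc A * bcirc B := by
  funext p q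
  simp only [bcirc, tProd, Matrix.mul_apply, Fintype.sum_prod_type]
  refine Finset.sum_congr rfl fun l _ => ?_
  refine Fintype.sum_equiv (Equiv.addRight q.2) _ _ fun m => ?_
  have : p.2 - (m + q.2) = p.2 - q.2 - m := by ring
  simp [Equiv.coe_addRight, this, add_sub_cancel_right]

lemma bcirc_one' (n : ℕ) : bcirc (tId n n₃) = 1 := by
  funext p q
  simp only [bcirc, tId, Matrix.one_apply]
  by_cases h : p = q
  · simp [h]
  · have : ¬(p.1 = q.1 ∧ p.2 - q.2 = 0) := by
      intro ⟨h1, h2⟩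
      exact h (Prod.ext h1 (by rwa [sub_eq_zero] at h2))
    simp [this, h]

lemma real_arith' (na ni nE nb nk nx nh : ℝ) (hna : 0 < na) (hnb : 0 < nb)
    (hnx : 0 < nx) (hni : 0 ≤ ni) (hnE : 0 ≤ nE) (hnk : 0 ≤ nk) (hnh : 0 ≤ nh)
    (hg : 0 < 1 - ni * nE)
    (h1 : nh ≤ ni * nk + ni * nE * nx + ni * nE * nh)
    (h2 : nb ≤ na * nx) :
    nh / nx ≤ (ni * na / (1 - ni * nE)) * (nE / na + nk / nb) := by
  rw [div_add_div _ _ (ne_of_gt hna) (ne_of_gt hnb), div_mul_div_comm,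
    div_le_div_iff₀ hnx (by positivity)]
  have key : nh * (1 - ni * nE) ≤ ni * nk + ni * nE * nx := by nlinarith
  nlinarith [mul_le_mul_of_nonneg_left h2 (by positivity : (0:ℝ) ≤ ni * nk),
    mul_le_mul_of_nonneg_left key (by positivity : (0:ℝ) ≤ na * nb)]

lemma bcirc_ne_zero' {B : Fin n₁ → Fin n₂ → ZMod n₃ → ℝ} (hB : B ≠ 0) : bcirc B ≠ 0 := by
  intro h
  apply hB
  funext i j k
  have := congrFun (congrFun h (i, k)) (j, 0)
  simpa [bcirc] using this

end Aux

theorem perturbed_system_spectral_bound (n n₃ n₄ : ℕ) [NeZero n₃]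
    (hn : 0 < n) (hn₄ : 0 < n₄)
    (A Ainv E : Fin n → Fin n → ZMod n₃ → ℝ)
    (B K X H : Fin n → Fin n₄ → ZMod n₃ → ℝ)
    (hA₁ : tProd A Ainv = tId n n₃) (hA₂ : tProd Ainv A = tId n n₃)
    (hE : specNorm Ainv * specNorm E < 1)
    (hB : B ≠ 0)
    (hX : tProd A X = B)
    (hH : tProd (A + E) (X + H) = B + K) :
    specNorm H / specNorm X ≤
      (specNorm Ainv * specNorm A / (1 - specNorm Ainv * specNorm E)) *
        (specNorm E / specNorm A + specNorm K / specNorm B) := by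
  classical
  set a := bcirc A
  set ai := bcirc Ainv
  set e := bcirc E
  set b := bcirc B
  set k := bcirc K
  set x := bcirc X
  set h := bcirc H
  have haai : a * ai = 1 := by rw [← bcirc_mul', hA₁, bcirc_one']
  have haia : ai * a = 1 := by rw [← bcirc_mul', hA₂, bcirc_one']
  have hax : a * x = b := by rw [← bcirc_mul', hX]
  have hEq : (a + e) * (x + h) = b + k := by
    rw [← bcirc_add', ← bcirc_add', ← bcirc_mul', hH, bcirc_add']
  haveI : Nonempty (Fin n) := Fin.pos_iff_nonempty.mp hn
  -- h = ai * k - ai * (e * x) - ai * (e * h)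
  have hform : h = ai * k - ai * (e * x) - ai * (e * h) := by
    have h1 : a * h = k - e * x - e * h := by
      rw [Matrix.add_mul, Matrix.mul_add, Matrix.mul_add, hax] at hEq
      calc a * h = ((b + a * h) + (e * x + e * h)) - b - e * x - e * h := by abel
      _ = (b + k) - b - e * x - e * h := by rw [hEq]
      _ = k - e * x - e * h := by abel
    calc h = (ai * a) * h := by rw [haia, Matrix.one_mul]
    _ = ai * (a * h) := by rw [Matrix.mul_assoc]
    _ = ai * (k - e * x - e * h) := by rw [h1]
    _ = ai * k - ai * (e * x) - ai * (e * h) := by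
        rw [Matrix.mul_sub, Matrix.mul_sub]
  have hb0 : b ≠ 0 := bcirc_ne_zero' hB
  have hx0 : x ≠ 0 := by
    intro hx'
    rw [hx', Matrix.mul_zero] at hax
    exact hb0 hax.symm
  have ha0 : a ≠ 0 := by
    intro ha'
    rw [ha', Matrix.zero_mul] at haai
    exact one_ne_zero haai.symm
  have npos : ∀ (M : Matrix (Fin n × ZMod n₃) (Fin n₄ × ZMod n₃) ℝ), M ≠ 0 → 0 < ‖M‖ :=
    fun M hM => norm_pos_iff.mpr hM
  have hxp : (0:ℝ) < ‖x‖ := npos x hx0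
  have hbp : (0:ℝ) < ‖b‖ := npos b hb0
  have hap : (0:ℝ) < ‖a‖ := norm_pos_iff.mpr ha0
  have hE' : ‖ai‖ * ‖e‖ < 1 := hE
  have hγ : (0:ℝ) < 1 - ‖ai‖ * ‖e‖ := by linarith
  -- norm inequalities
  have hnh : ‖h‖ ≤ ‖ai‖ * ‖k‖ + ‖ai‖ * ‖e‖ * ‖x‖ + ‖ai‖ * ‖e‖ * ‖h‖ := by
    calc ‖h‖ = ‖ai * k - ai * (e * x) - ai * (e * h)‖ := by rw [← hform]
    _ ≤ ‖ai * k - ai * (e * x)‖ + ‖ai * (e * h)‖ := norm_sub_le _ _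
    _ ≤ ‖ai * k‖ + ‖ai * (e * x)‖ + ‖ai * (e * h)‖ := by
        linarith [norm_sub_le (ai * k) (ai * (e * x))]
    _ ≤ ‖ai‖ * ‖k‖ + ‖ai‖ * ‖e‖ * ‖x‖ + ‖ai‖ * ‖e‖ * ‖h‖ := by
        have h1 := Matrix.l2_opNorm_mul ai k
        have h2 : ‖ai * (e * x)‖ ≤ ‖ai‖ * ‖e‖ * ‖x‖ := by
          rw [mul_assoc]
          exact le_trans (Matrix.l2_opNorm_mul _ _)
            (mul_le_mul_of_nonneg_left (Matrix.l2_opNorm_mul _ _) (norm_nonneg _))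
        have h3 : ‖ai * (e * h)‖ ≤ ‖ai‖ * ‖e‖ * ‖h‖ := by
          rw [mul_assoc]
          exact le_trans (Matrix.l2_opNorm_mul _ _)
            (mul_le_mul_of_nonneg_left (Matrix.l2_opNorm_mul _ _) (norm_nonneg _))
        linarith
  have hbx : ‖b‖ ≤ ‖a‖ * ‖x‖ := by
    rw [← hax]; exact Matrix.l2_opNorm_mul a x
  exact real_arith' ‖a‖ ‖ai‖ ‖e‖ ‖b‖ ‖k‖ ‖x‖ ‖h‖ hap hbp hxp (norm_nonneg _)
    (norm_nonneg _) (norm_nonneg _) (norm_nonneg _) hγ hnh hbx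
end

section
/- Let A and E be real tensors of size n₁×n₂×n₃ and B = A+E (entrywise). Let Ap be a Moore-Penrose inverse of A and Bp a Moore-Penrose inverse of B. Then ‖Bp − Ap‖_F ≤ √2·max{‖Ap‖₂², ‖Bp‖₂²}·‖E‖_F. -/
open scoped Matrix.Norms.L2Operator

open Matrix

namespace WedinAux

variable {m n p : Type*} [Fintype m] [Fintype n] [Fintype p]
  [DecidableEq m] [DecidableEq n] [DecidableEq p]



noncomputable def fro2 (M : Matrix m n ℝ) : ℝ := ∑ i, ∑ j, (M i j) ^ 2

lemma fro2_nonneg (M : Matrix m n ℝ) : 0 ≤ fro2 M :=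
  Finset.sum_nonneg fun _ _ => Finset.sum_nonneg fun _ _ => sq_nonneg _

lemma fro2_transpose (M : Matrix m n ℝ) : fro2 Mᵀ = fro2 M := by
  unfold fro2; rw [Finset.sum_comm]; rfl

lemma fro2_neg (M : Matrix m n ℝ) : fro2 (-M) = fro2 M := by
  unfold fro2; simp

noncomputable def dotf (M N : Matrix m n ℝ) : ℝ := ∑ i, ∑ j, M i j * N i j

lemma dotf_eq_trace (M N : Matrix m n ℝ) : dotf M N = Matrix.trace (Mᵀ * N) := by
  unfold dotf Matrix.trace
  simp [Matrix.mul_apply, Matrix.diag]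
  rw [Finset.sum_comm]

lemma dotf_eq_trace' (M N : Matrix m n ℝ) : dotf M N = Matrix.trace (M * Nᵀ) := by
  unfold dotf Matrix.trace
  simp [Matrix.mul_apply, Matrix.diag]

lemma fro2_add (M N : Matrix m n ℝ) :
    fro2 (M + N) = fro2 M + 2 * dotf M N + fro2 N := by
  unfold fro2 dotf
  simp only [Matrix.add_apply, add_sq, Finset.sum_add_distrib, Finset.mul_sum]
  ring_nf

/-- Pythagoras, left version: if `Xᵀ * Y = 0` then norms add. -/
lemma pyth_left {X Y : Matrix m n ℝ} (h : Xᵀ * Y = 0) :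
    fro2 (X + Y) = fro2 X + fro2 Y := by
  rw [fro2_add, dotf_eq_trace, h]
  simp

/-- Pythagoras, right version: if `X * Yᵀ = 0` then norms add. -/
lemma pyth_right {X Y : Matrix m n ℝ} (h : X * Yᵀ = 0) :
    fro2 (X + Y) = fro2 X + fro2 Y := by
  rw [fro2_add, dotf_eq_trace', h]
  simp




lemma euclid_bound (M : Matrix m n ℝ) (x : n → ℝ) :
    ∑ i, (M.mulVec x i) ^ 2 ≤ ‖M‖ ^ 2 * ∑ j, (x j) ^ 2 := by
  have h := M.l2_opNorm_mulVec ((EuclideanSpace.equiv n ℝ).symm x)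
  have hx : ‖(EuclideanSpace.equiv n ℝ).symm x‖ = Real.sqrt (∑ j, (x j) ^ 2) := by
    rw [EuclideanSpace.norm_eq]
    congr 1
    simp [sq_abs]
  have hy : ‖(EuclideanSpace.equiv m ℝ).symm (M.mulVec ((EuclideanSpace.equiv n ℝ).symm x))‖
      = Real.sqrt (∑ i, (M.mulVec x i) ^ 2) := by
    rw [EuclideanSpace.norm_eq]
    congr 1
    simp [sq_abs]
  rw [hy, hx] at h
  have h2 := mul_self_le_mul_self (Real.sqrt_nonneg _) h
  rw [Real.mul_self_sqrt (Finset.sum_nonneg fun _ _ => sq_nonneg _)] at h2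
  calc ∑ i, (M.mulVec x i) ^ 2 ≤ (‖M‖ * Real.sqrt (∑ j, (x j) ^ 2)) *
        (‖M‖ * Real.sqrt (∑ j, (x j) ^ 2)) := h2
    _ = ‖M‖ ^ 2 * (Real.sqrt (∑ j, (x j) ^ 2) * Real.sqrt (∑ j, (x j) ^ 2)) := by ring
    _ = ‖M‖ ^ 2 * ∑ j, (x j) ^ 2 := by
        rw [Real.mul_self_sqrt (Finset.sum_nonneg fun _ _ => sq_nonneg _)]

lemma fro2_mul_le_left (M : Matrix m n ℝ) (N : Matrix n p ℝ) :
    fro2 (M * N) ≤ ‖M‖ ^ 2 * fro2 N := by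
  unfold fro2
  rw [Finset.sum_comm, Finset.sum_comm (s := Finset.univ (α := n)), Finset.mul_sum]
  apply Finset.sum_le_sum
  intro j _
  have := euclid_bound M (fun k => N k j)
  simpa [Matrix.mul_apply, Matrix.mulVec, dotProduct] using this

lemma fro2_mul_le_right (M : Matrix m n ℝ) (N : Matrix p m ℝ) :
    fro2 (N * M) ≤ fro2 N * ‖M‖ ^ 2 := by
  have ht : ‖Mᵀ‖ = ‖M‖ := by
    have : Mᵀ = Mᴴ := by ext i j; simp [Matrix.conjTranspose]
    rw [this, Matrix.l2_opNorm_conjTranspose]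
  calc fro2 (N * M) = fro2 ((N * M)ᵀ) := (fro2_transpose _).symm
    _ = fro2 (Mᵀ * Nᵀ) := by rw [Matrix.transpose_mul]
    _ ≤ ‖Mᵀ‖ ^ 2 * fro2 Nᵀ := fro2_mul_le_left _ _
    _ = fro2 N * ‖M‖ ^ 2 := by rw [ht, fro2_transpose]; ring


lemma l2norm_transpose (M : Matrix m n ℝ) : ‖Mᵀ‖ = ‖M‖ := by
  have h : Mᵀ = Mᴴ := by ext i j; simp [Matrix.conjTranspose]
  rw [h, Matrix.l2_opNorm_conjTranspose]

lemma fro2_one_sub_mul_le {Q : Matrix m m ℝ} (hQt : Qᵀ = Q) (hQ2 : Q * Q = Q)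
    (M : Matrix m n ℝ) : fro2 ((1 - Q) * M) ≤ fro2 M := by
  have hsum : Q * M + (1 - Q) * M = M := by
    rw [← Matrix.add_mul]; simp
  have hzero : (Q * M)ᵀ * ((1 - Q) * M) = 0 := by
    rw [Matrix.transpose_mul, hQt, Matrix.mul_assoc, ← Matrix.mul_assoc Q,
      Matrix.mul_sub, Matrix.mul_one, hQ2, sub_self, Matrix.zero_mul, Matrix.mul_zero]
  have := pyth_left hzero
  rw [hsum] at this
  have h0 := fro2_nonneg (Q * M)
  linarith

set_option maxHeartbeats 1000000 in
lemma wedin_fro2 (A E : Matrix m n ℝ) (Ap Bp : Matrix n m ℝ)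
    (hA1 : A * Ap * A = A) (hA2 : Ap * A * Ap = Ap)
    (hA3 : (A * Ap)ᵀ = A * Ap) (hA4 : (Ap * A)ᵀ = Ap * A)
    (hB1 : (A + E) * Bp * (A + E) = A + E) (hB2 : Bp * (A + E) * Bp = Bp)
    (hB3 : ((A + E) * Bp)ᵀ = (A + E) * Bp) (hB4 : (Bp * (A + E))ᵀ = Bp * (A + E)) :
    fro2 (Bp - Ap) ≤ 2 * max (‖Ap‖ ^ 2) (‖Bp‖ ^ 2) ^ 2 * fro2 E := by
  set B := A + E with hBdef
  set P := A * Ap with hPdef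
  set Q := Bp * B with hQdef
  have hPt : Pᵀ = P := hA3
  have hQt : Qᵀ = Q := hB4
  have hP2 : P * P = P := by
    rw [hPdef, ← Matrix.mul_assoc, hA1]
  have hQ2 : Q * Q = Q := by
    rw [hQdef, ← Matrix.mul_assoc, hB2]
  have hApP : Ap * P = Ap := by
    rw [hPdef, ← Matrix.mul_assoc, hA2]
  have hQBp : Q * Bp = Bp := by
    rw [hQdef, hB2]
  have hAtP : Aᵀ * P = Aᵀ := by
    conv_lhs => rw [← hPt, hPdef]
    rw [← Matrix.transpose_mul, hA1]
  have hQBt : Q * Bᵀ = Bᵀ := by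
    conv_lhs => rw [← hQt, hQdef]
    rw [← Matrix.transpose_mul, ← Matrix.mul_assoc, hB1]
  have hBpdec : Bp = Bp * (Bpᵀ * Bᵀ) := by
    conv_lhs => rw [← hB2, Matrix.mul_assoc, ← hB3, Matrix.transpose_mul]
  have hApdec : Ap = (Aᵀ * Apᵀ) * Ap := by
    conv_lhs => rw [← hA2]
    rw [← hA4, Matrix.transpose_mul]
  set T1 : Matrix n m ℝ := -(Bp * (E * Ap)) with hT1def
  set T2 : Matrix n m ℝ := Bp * Bpᵀ * Eᵀ * (1 - P) with hT2def
  set T3 : Matrix n m ℝ := (1 - Q) * (Eᵀ * Apᵀ * Ap) with hT3def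
  -- T2 = Bp * (1 - P)
  have hT2eq : Bp * (1 - P) = T2 := by
    have hBt : Bᵀ * (1 - P) = Eᵀ * (1 - P) := by
      rw [hBdef, Matrix.transpose_add, Matrix.add_mul, Matrix.mul_sub, Matrix.mul_one,
        hAtP, sub_self, zero_add]
    rw [hT2def]
    conv_lhs => rw [hBpdec]
    simp only [Matrix.mul_assoc]
    rw [hBt]
  -- (1 - Q) * Ap = -T3
  have hT3eq : (1 - Q) * Ap = -T3 := by
    conv_lhs => rw [hApdec]
    have hAt : (1 - Q) * Aᵀ = -((1 - Q) * Eᵀ) := by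
      have : Aᵀ = Bᵀ - Eᵀ := by rw [hBdef, Matrix.transpose_add]; abel
      rw [this, Matrix.mul_sub, Matrix.sub_mul, Matrix.one_mul, hQBt, sub_self, zero_sub]
    rw [hT3def, ← Matrix.mul_assoc, ← Matrix.mul_assoc, hAt]
    simp [Matrix.mul_assoc]
  -- decomposition
  have hDecomp : Bp - Ap = (T1 + T3) + T2 := by
    have base : Bp - Ap = T1 + (Bp * (1 - P) - (1 - Q) * Ap) := by
      rw [hT1def, hPdef, hQdef, hBdef]
      simp only [Matrix.mul_sub, Matrix.sub_mul, Matrix.mul_add, Matrix.add_mul,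
        Matrix.mul_one, Matrix.one_mul, Matrix.mul_assoc]
      abel
    rw [base, hT2eq, hT3eq]
    abel
  -- orthogonality 1 : (T1 + T3) * T2ᵀ = 0
  have hOrtho1 : (T1 + T3) * T2ᵀ = 0 := by
    have hT1P : T1 * P = T1 := by
      rw [hT1def, Matrix.neg_mul, Matrix.mul_assoc, Matrix.mul_assoc, hApP]
    have hT3P : T3 * P = T3 := by
      rw [hT3def, Matrix.mul_assoc, Matrix.mul_assoc (Eᵀ * Apᵀ), hApP]
    have hsub : (T1 + T3) * (1 - P) = 0 := by
      rw [Matrix.mul_sub, Matrix.mul_one, Matrix.add_mul, hT1P, hT3P, sub_self]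
    have hT2t : T2ᵀ = (1 - P) * (Bp * Bpᵀ * Eᵀ)ᵀ := by
      rw [hT2def, Matrix.transpose_mul, Matrix.transpose_sub, Matrix.transpose_one, hPt]
    rw [hT2t, ← Matrix.mul_assoc, hsub, Matrix.zero_mul]
  -- orthogonality 2 : T1ᵀ * T3 = 0
  have hOrtho2 : T1ᵀ * T3 = 0 := by
    have hQT1 : Q * T1 = T1 := by
      rw [hT1def, Matrix.mul_neg, ← Matrix.mul_assoc, hQBp]
    have hT1tQ : T1ᵀ * (1 - Q) = 0 := by
      rw [Matrix.mul_sub, Matrix.mul_one, ← hQt, ← Matrix.transpose_mul, hQT1, sub_self]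
    rw [hT3def, ← Matrix.mul_assoc, hT1tQ, Matrix.zero_mul]
  -- splits
  have hsplit1 : fro2 (Bp - Ap) = (fro2 T1 + fro2 T3) + fro2 T2 := by
    rw [hDecomp, pyth_right hOrtho1, pyth_left hOrtho2]
  -- bounds
  have hb1 : fro2 T1 ≤ ‖Bp‖ ^ 2 * (fro2 E * ‖Ap‖ ^ 2) := by
    rw [hT1def, fro2_neg]
    calc fro2 (Bp * (E * Ap)) ≤ ‖Bp‖ ^ 2 * fro2 (E * Ap) := fro2_mul_le_left _ _
      _ ≤ ‖Bp‖ ^ 2 * (fro2 E * ‖Ap‖ ^ 2) := by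
          apply mul_le_mul_of_nonneg_left (fro2_mul_le_right _ _) (sq_nonneg _)
  have hb2 : fro2 T2 ≤ ‖Bp‖ ^ 2 * (‖Bp‖ ^ 2 * fro2 ((1 - P) * E)) := by
    have h1 : T2 = Bp * (Bpᵀ * (Eᵀ * (1 - P))) := by
      rw [hT2def]; simp [Matrix.mul_assoc]
    have h2 : Eᵀ * (1 - P) = ((1 - P) * E)ᵀ := by
      rw [Matrix.transpose_mul, Matrix.transpose_sub, Matrix.transpose_one, hPt]
    calc fro2 T2 ≤ ‖Bp‖ ^ 2 * fro2 (Bpᵀ * (Eᵀ * (1 - P))) := by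
          rw [h1]; exact fro2_mul_le_left _ _
      _ ≤ ‖Bp‖ ^ 2 * (‖Bp‖ ^ 2 * fro2 ((1 - P) * E)) := by
          apply mul_le_mul_of_nonneg_left _ (sq_nonneg _)
          have h6 : fro2 (Eᵀ * (1 - P)) = fro2 ((1 - P) * E) := by
            rw [h2, fro2_transpose]
          calc fro2 (Bpᵀ * (Eᵀ * (1 - P))) ≤ ‖Bpᵀ‖ ^ 2 * fro2 (Eᵀ * (1 - P)) :=
                fro2_mul_le_left _ _
            _ = ‖Bp‖ ^ 2 * fro2 ((1 - P) * E) := by rw [l2norm_transpose, h6]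
  have hb3 : fro2 T3 ≤ ‖Ap‖ ^ 2 * (‖Ap‖ ^ 2 * fro2 (P * E)) := by
    have h1 : fro2 T3 ≤ fro2 (Eᵀ * Apᵀ * Ap) := by
      rw [hT3def]
      exact fro2_one_sub_mul_le hQt hQ2 _
    have h2 : fro2 (Eᵀ * Apᵀ * Ap) ≤ fro2 (Eᵀ * Apᵀ) * ‖Ap‖ ^ 2 := fro2_mul_le_right _ _
    have h3 : Eᵀ * Apᵀ = (Ap * E)ᵀ := (Matrix.transpose_mul _ _).symm
    have h4 : Ap * E = Ap * (P * E) := by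
      rw [← Matrix.mul_assoc, hApP]
    have h5 : fro2 (Ap * E) ≤ ‖Ap‖ ^ 2 * fro2 (P * E) := by
      rw [h4]; exact fro2_mul_le_left _ _
    calc fro2 T3 ≤ fro2 (Eᵀ * Apᵀ) * ‖Ap‖ ^ 2 := le_trans h1 h2
      _ = fro2 (Ap * E) * ‖Ap‖ ^ 2 := by rw [h3, fro2_transpose]
      _ ≤ (‖Ap‖ ^ 2 * fro2 (P * E)) * ‖Ap‖ ^ 2 := by
          apply mul_le_mul_of_nonneg_right h5 (sq_nonneg _)
      _ = ‖Ap‖ ^ 2 * (‖Ap‖ ^ 2 * fro2 (P * E)) := by ring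
  -- energy split of E
  have hsplitE : fro2 (P * E) + fro2 ((1 - P) * E) = fro2 E := by
    have hsum : P * E + (1 - P) * E = E := by rw [← Matrix.add_mul]; simp
    have hzero : (P * E)ᵀ * ((1 - P) * E) = 0 := by
      rw [Matrix.transpose_mul, hPt, Matrix.mul_assoc, ← Matrix.mul_assoc P,
        Matrix.mul_sub, Matrix.mul_one, hP2, sub_self, Matrix.zero_mul, Matrix.mul_zero]
    rw [← pyth_left hzero, hsum]
  -- final arithmetic
  have hα : (0:ℝ) ≤ ‖Ap‖ ^ 2 := sq_nonneg _
  have hβ : (0:ℝ) ≤ ‖Bp‖ ^ 2 := sq_nonneg _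
  have hαμ : ‖Ap‖ ^ 2 ≤ max (‖Ap‖ ^ 2) (‖Bp‖ ^ 2) := le_max_left _ _
  have hβμ : ‖Bp‖ ^ 2 ≤ max (‖Ap‖ ^ 2) (‖Bp‖ ^ 2) := le_max_right _ _
  have hE := fro2_nonneg E
  have hPE := fro2_nonneg (P * E)
  have hPE' := fro2_nonneg ((1 - P) * E)
  set μ := max (‖Ap‖ ^ 2) (‖Bp‖ ^ 2) with hμdef
  have hμ : (0:ℝ) ≤ μ := le_trans hα hαμ
  have k1 : fro2 T1 ≤ μ * μ * fro2 E := by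
    have h := mul_le_mul_of_nonneg_right (mul_le_mul hβμ hαμ hα hμ) hE
    calc fro2 T1 ≤ ‖Bp‖ ^ 2 * (fro2 E * ‖Ap‖ ^ 2) := hb1
      _ = ‖Bp‖ ^ 2 * ‖Ap‖ ^ 2 * fro2 E := by ring
      _ ≤ μ * μ * fro2 E := h
  have k2 : fro2 T2 ≤ μ * μ * fro2 ((1 - P) * E) := by
    have h := mul_le_mul_of_nonneg_right (mul_le_mul hβμ hβμ hβ hμ) hPE'
    calc fro2 T2 ≤ ‖Bp‖ ^ 2 * (‖Bp‖ ^ 2 * fro2 ((1 - P) * E)) := hb2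
      _ = ‖Bp‖ ^ 2 * ‖Bp‖ ^ 2 * fro2 ((1 - P) * E) := by ring
      _ ≤ μ * μ * fro2 ((1 - P) * E) := h
  have k3 : fro2 T3 ≤ μ * μ * fro2 (P * E) := by
    have h := mul_le_mul_of_nonneg_right (mul_le_mul hαμ hαμ hα hμ) hPE
    calc fro2 T3 ≤ ‖Ap‖ ^ 2 * (‖Ap‖ ^ 2 * fro2 (P * E)) := hb3
      _ = ‖Ap‖ ^ 2 * ‖Ap‖ ^ 2 * fro2 (P * E) := by ring
      _ ≤ μ * μ * fro2 (P * E) := h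
  have hμsq : μ ^ 2 = μ * μ := sq μ
  rw [hsplit1, hμsq]
  nlinarith [k1, k2, k3, hsplitE, mul_le_mul_of_nonneg_left
    (le_of_eq hsplitE) (mul_nonneg hμ hμ)]




lemma bcirc_mul {n₁ n₂ n₃ n₄ : ℕ} [NeZero n₃] (A : Fin n₁ → Fin n₂ → ZMod n₃ → ℝ)
    (B : Fin n₂ → Fin n₄ → ZMod n₃ → ℝ) :
    bcirc (tProd A B) = bcirc A * bcirc B := by
  ext ⟨i, k⟩ ⟨j, m⟩
  simp only [bcirc, tProd, Matrix.mul_apply, Fintype.sum_prod_type]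
  refine Finset.sum_congr rfl fun l _ => ?_
  refine Fintype.sum_equiv (Equiv.addRight m) _ _ fun q => ?_
  simp only [Equiv.coe_addRight]
  rw [show k - (q + m) = k - m - q by ring, show q + m - m = q by ring]

lemma bcirc_transpose {n₁ n₂ n₃ : ℕ} (A : Fin n₁ → Fin n₂ → ZMod n₃ → ℝ) :
    bcirc (tTrans A) = (bcirc A)ᵀ := by
  ext ⟨i, k⟩ ⟨j, m⟩
  simp only [bcirc, tTrans, Matrix.transpose_apply]
  rw [neg_sub]

lemma bcirc_add {n₁ n₂ n₃ : ℕ} (A E : Fin n₁ → Fin n₂ → ZMod n₃ → ℝ) :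
    bcirc (A + E) = bcirc A + bcirc E := rfl

lemma bcirc_sub {n₁ n₂ n₃ : ℕ} (A E : Fin n₁ → Fin n₂ → ZMod n₃ → ℝ) :
    bcirc (A - E) = bcirc A - bcirc E := rfl

lemma fro2_bcirc {n₁ n₂ n₃ : ℕ} [NeZero n₃] (X : Fin n₁ → Fin n₂ → ZMod n₃ → ℝ) :
    fro2 (bcirc X) = n₃ * ∑ i, ∑ j, ∑ k, (X i j k) ^ 2 := by
  unfold fro2 bcirc
  rw [Fintype.sum_prod_type]
  have h1 : ∀ (i : Fin n₁) (k : ZMod n₃) (j : Fin n₂),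
      ∑ m : ZMod n₃, (X i j (k - m)) ^ 2 = ∑ k' : ZMod n₃, (X i j k') ^ 2 := fun i k j =>
    Fintype.sum_equiv (Equiv.subLeft k) _ _ fun _ => rfl
  calc ∑ i : Fin n₁, ∑ k : ZMod n₃, ∑ q : Fin n₂ × ZMod n₃, X i q.1 (k - q.2) ^ 2
      = ∑ i : Fin n₁, ∑ k : ZMod n₃, ∑ j : Fin n₂, ∑ m : ZMod n₃, X i j (k - m) ^ 2 := by
        refine Finset.sum_congr rfl fun i _ => Finset.sum_congr rfl fun k _ => ?_
        rw [Fintype.sum_prod_type]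
    _ = ∑ i : Fin n₁, ∑ _k : ZMod n₃, ∑ j : Fin n₂, ∑ k' : ZMod n₃, X i j k' ^ 2 := by
        simp_rw [h1]
    _ = n₃ * ∑ i, ∑ j, ∑ k, (X i j k) ^ 2 := by
        simp [Finset.sum_const, ZMod.card, Finset.mul_sum]


end WedinAux

theorem mp_inverse_perturbation_frobenius (n₁ n₂ n₃ : ℕ) [NeZero n₃]
    (hn₁ : 0 < n₁) (hn₂ : 0 < n₂)
    (A E : Fin n₁ → Fin n₂ → ZMod n₃ → ℝ)
    (Ap Bp : Fin n₂ → Fin n₁ → ZMod n₃ → ℝ)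
    (hAp : IsMPInv A Ap) (hBp : IsMPInv (A + E) Bp) :
    frobNorm (Bp - Ap) ≤
      Real.sqrt 2 * max (specNorm Ap ^ 2) (specNorm Bp ^ 2) * frobNorm E := by
  obtain ⟨a1, a2, a3, a4⟩ := hAp
  obtain ⟨b1, b2, b3, b4⟩ := hBp
  have m1 : bcirc A * bcirc Ap * bcirc A = bcirc A := by
    have h := congrArg bcirc a1
    rwa [WedinAux.bcirc_mul, WedinAux.bcirc_mul] at h
  have m2 : bcirc Ap * bcirc A * bcirc Ap = bcirc Ap := by
    have h := congrArg bcirc a2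
    rwa [WedinAux.bcirc_mul, WedinAux.bcirc_mul] at h
  have m3 : (bcirc A * bcirc Ap)ᵀ = bcirc A * bcirc Ap := by
    have h := congrArg bcirc a3
    rwa [WedinAux.bcirc_transpose, WedinAux.bcirc_mul] at h
  have m4 : (bcirc Ap * bcirc A)ᵀ = bcirc Ap * bcirc A := by
    have h := congrArg bcirc a4
    rwa [WedinAux.bcirc_transpose, WedinAux.bcirc_mul] at h
  have m5 : (bcirc A + bcirc E) * bcirc Bp * (bcirc A + bcirc E) = bcirc A + bcirc E := by
    have h := congrArg bcirc b1
    rwa [WedinAux.bcirc_mul, WedinAux.bcirc_mul, WedinAux.bcirc_add] at h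
  have m6 : bcirc Bp * (bcirc A + bcirc E) * bcirc Bp = bcirc Bp := by
    have h := congrArg bcirc b2
    rwa [WedinAux.bcirc_mul, WedinAux.bcirc_mul, WedinAux.bcirc_add] at h
  have m7 : ((bcirc A + bcirc E) * bcirc Bp)ᵀ = (bcirc A + bcirc E) * bcirc Bp := by
    have h := congrArg bcirc b3
    rwa [WedinAux.bcirc_transpose, WedinAux.bcirc_mul, WedinAux.bcirc_add] at h
  have m8 : (bcirc Bp * (bcirc A + bcirc E))ᵀ = bcirc Bp * (bcirc A + bcirc E) := by
    have h := congrArg bcirc b4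
    rwa [WedinAux.bcirc_transpose, WedinAux.bcirc_mul, WedinAux.bcirc_add] at h
  have key := WedinAux.wedin_fro2 (bcirc A) (bcirc E) (bcirc Ap) (bcirc Bp)
    m1 m2 m3 m4 m5 m6 m7 m8
  rw [← WedinAux.bcirc_sub, WedinAux.fro2_bcirc, WedinAux.fro2_bcirc] at key
  set M : ℝ := max (‖bcirc Ap‖ ^ 2) (‖bcirc Bp‖ ^ 2) with hMdef
  have hM : (0:ℝ) ≤ M := le_trans (sq_nonneg _) (le_max_left _ _)
  have hn3 : (0:ℝ) < (n₃ : ℝ) := by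
    exact_mod_cast Nat.pos_of_ne_zero (NeZero.ne n₃)
  set S1 : ℝ := ∑ i, ∑ j, ∑ k, ((Bp - Ap) i j k) ^ 2 with hS1def
  set S2 : ℝ := ∑ i, ∑ j, ∑ k, (E i j k) ^ 2 with hS2def
  have hS : S1 ≤ 2 * M ^ 2 * S2 := by
    have h2 : (n₃ : ℝ) * S1 ≤ (n₃ : ℝ) * (2 * M ^ 2 * S2) := by
      calc (n₃ : ℝ) * S1 ≤ 2 * M ^ 2 * ((n₃ : ℝ) * S2) := key
        _ = (n₃ : ℝ) * (2 * M ^ 2 * S2) := by ring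
    exact le_of_mul_le_mul_left h2 hn3
  calc frobNorm (Bp - Ap) = Real.sqrt S1 := rfl
    _ ≤ Real.sqrt (2 * M ^ 2 * S2) := Real.sqrt_le_sqrt hS
    _ = Real.sqrt (2 * M ^ 2) * Real.sqrt S2 := Real.sqrt_mul (by positivity) S2
    _ = Real.sqrt 2 * Real.sqrt (M ^ 2) * Real.sqrt S2 := by
        rw [Real.sqrt_mul (by norm_num)]
    _ = Real.sqrt 2 * M * Real.sqrt S2 := by rw [Real.sqrt_sq hM]
    _ = Real.sqrt 2 * max (specNorm Ap ^ 2) (specNorm Bp ^ 2) * frobNorm E := rfl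
end
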